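/- arXiv:1512.00673 — 2 statements merged into one kernel-verified Lean document; each statement's English description precedes it below -/
import Mathlib

section
/- Beltrami identity for the conjugate pair, form (i): let 1 < p < ∞, let Ω ⊆ ℝ² be open, A : Ω → ℝ, and let v, w : Ω → ℝ be differentiable at a point z ∈ Ω and satisfy at z: ∂_x w = −s·∂_y v and ∂_y w = s·∂_x v, where s := A(z)|∇v(z)|^{p−2} if ∇v(z) ≠ 0 and s := 0 otherwise. Define F := v + i w : Ω → ℂ, ∂F/∂z := ½(∂_x F − i ∂_y F) and ∂F/∂z̄ := ½(∂_x F + i ∂_y F), evaluated at z. Then (1 + s)·(∂F/∂z̄)(z) = (1 − s)·conj((∂F/∂z)(z)); in particular, when 1 + s ≠ 0, (∂F/∂z̄)(z) = ((1−s)/(1+s))·conj((∂F/∂z)(z)). -/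
open scoped Classical

noncomputable section

/-- Beltrami identity for the conjugate pair, form (i). With
`s = A(z)|∇v(z)|^{p-2}` (and `s = 0` when `∇v(z) = 0`), if at `z` one has
`∂ₓw = -s·∂_yv` and `∂_yw = s·∂ₓv`, then for `F = v + iw`:
`(1+s)·∂F/∂z̄ = (1-s)·conj(∂F/∂z)`, and when `1+s ≠ 0`,
`∂F/∂z̄ = ((1-s)/(1+s))·conj(∂F/∂z)`. -/
theorem beltrami_identity_i (p : ℝ) (hp : 1 < p)
    (Ω : Set ℂ) (hΩ : IsOpen Ω) (A : ℂ → ℝ) (v w : ℂ → ℝ) (z : ℂ) (hz : z ∈ Ω)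
    (hv : DifferentiableAt ℝ v z) (hw : DifferentiableAt ℝ w z)
    (s : ℝ)
    (hs : s = if fderiv ℝ v z 1 = 0 ∧ fderiv ℝ v z Complex.I = 0 then 0
      else A z * Real.sqrt ((fderiv ℝ v z 1) ^ 2 + (fderiv ℝ v z Complex.I) ^ 2) ^ (p - 2))
    (hwx : fderiv ℝ w z 1 = -s * fderiv ℝ v z Complex.I)
    (hwy : fderiv ℝ w z Complex.I = s * fderiv ℝ v z 1) :
    let F : ℂ → ℂ := fun ζ => (v ζ : ℂ) + (w ζ : ℂ) * Complex.I
    let Fz : ℂ := (1 / 2) * (fderiv ℝ F z 1 - Complex.I * fderiv ℝ F z Complex.I)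
    let Fzbar : ℂ := (1 / 2) * (fderiv ℝ F z 1 + Complex.I * fderiv ℝ F z Complex.I)
    ((1 + s : ℝ) : ℂ) * Fzbar = ((1 - s : ℝ) : ℂ) * (starRingEnd ℂ) Fz ∧
      (1 + s ≠ 0 → Fzbar = (((1 - s) / (1 + s) : ℝ) : ℂ) * (starRingEnd ℂ) Fz) := by
  intro F Fz Fzbar
  have h1 : HasFDerivAt (fun ζ => (v ζ : ℂ)) (Complex.ofRealCLM.comp (fderiv ℝ v z)) z :=
    Complex.ofRealCLM.hasFDerivAt.comp z hv.hasFDerivAt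
  have h2 : HasFDerivAt (fun ζ => (w ζ : ℂ)) (Complex.ofRealCLM.comp (fderiv ℝ w z)) z :=
    Complex.ofRealCLM.hasFDerivAt.comp z hw.hasFDerivAt
  have hF : HasFDerivAt F
      ((Complex.ofRealCLM.comp (fderiv ℝ v z)) +
        ((Complex.ofRealCLM.comp (fderiv ℝ w z)).smulRight Complex.I)) z := by
    have := h1.add (h2.mul_const Complex.I)
    refine HasFDerivAt.congr_fderiv this ?_
    ext c <;> simp [mul_comm]
  have hFd := hF.fderiv
  have hFx : fderiv ℝ F z 1 = ((fderiv ℝ v z 1 : ℝ) : ℂ) + ((fderiv ℝ w z 1 : ℝ) : ℂ) * Complex.I := by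
    rw [hFd]; simp [smul_eq_mul]
  have hFy : fderiv ℝ F z Complex.I =
      ((fderiv ℝ v z Complex.I : ℝ) : ℂ) + ((fderiv ℝ w z Complex.I : ℝ) : ℂ) * Complex.I := by
    rw [hFd]; simp [smul_eq_mul]
  set a := fderiv ℝ v z 1
  set b := fderiv ℝ v z Complex.I
  rw [hwx] at hFx
  rw [hwy] at hFy
  have key : ((1 + s : ℝ) : ℂ) * Fzbar = ((1 - s : ℝ) : ℂ) * (starRingEnd ℂ) Fz := by
    show ((1 + s : ℝ) : ℂ) * ((1 / 2) * (fderiv ℝ F z 1 + Complex.I * fderiv ℝ F z Complex.I)) =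
      ((1 - s : ℝ) : ℂ) * (starRingEnd ℂ)
        ((1 / 2) * (fderiv ℝ F z 1 - Complex.I * fderiv ℝ F z Complex.I))
    rw [hFx, hFy]
    simp only [map_mul, map_add, map_sub, map_one, map_div₀, Complex.conj_ofReal,
      Complex.conj_I, map_ofNat]
    push_cast
    simp [Complex.ext_iff]
    constructor <;> ring
  refine ⟨key, fun hne => ?_⟩
  have h1s : ((1 + s : ℝ) : ℂ) ≠ 0 := by
    exact_mod_cast hne
  have h1s' : (1 + (s : ℂ)) ≠ 0 := by exact_mod_cast hne
  rw [Complex.ofReal_div, div_mul_eq_mul_div, eq_div_iff h1s]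
  linear_combination key
end
end

section
/- Beltrami identity for the conjugate pair, form (ii): let 1 < p < ∞, let Ω ⊆ ℝ² be open, A : Ω → ℝ, and let v, w : Ω → ℝ be differentiable at a point z ∈ Ω. Suppose f := ∂_x v(z) − i ∂_y v(z) ≠ 0 and that at z: ∂_x w = −A(z)|f|^{p−2}·∂_y v and ∂_y w = A(z)|f|^{p−2}·∂_x v. Define F := v + i w : Ω → ℂ, ∂F/∂z := ½(∂_x F − i ∂_y F) and ∂F/∂z̄ := ½(∂_x F + i ∂_y F), evaluated at z. Then f·(1 + A(z)|f|^{p−2})·(∂F/∂z̄)(z) = (1 − A(z)|f|^{p−2})·conj(f)·(∂F/∂z)(z). -/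
noncomputable section

/-- Beltrami identity for the conjugate pair, form (ii). With
`f = ∂ₓv(z) - i·∂_yv(z) ≠ 0`, if at `z` one has `∂ₓw = -A(z)|f|^{p-2}·∂_yv` and
`∂_yw = A(z)|f|^{p-2}·∂ₓv`, then for `F = v + iw`:
`f·(1 + A(z)|f|^{p-2})·∂F/∂z̄ = (1 - A(z)|f|^{p-2})·conj(f)·∂F/∂z`. -/
theorem beltrami_identity_ii (p : ℝ) (hp : 1 < p)
    (Ω : Set ℂ) (hΩ : IsOpen Ω) (A : ℂ → ℝ) (v w : ℂ → ℝ) (z : ℂ) (hz : z ∈ Ω)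
    (hv : DifferentiableAt ℝ v z) (hw : DifferentiableAt ℝ w z)
    (f : ℂ)
    (hf : f = ((fderiv ℝ v z 1 : ℝ) : ℂ) - ((fderiv ℝ v z Complex.I : ℝ) : ℂ) * Complex.I)
    (hf0 : f ≠ 0)
    (hwx : fderiv ℝ w z 1 = -(A z * ‖f‖ ^ (p - 2) * fderiv ℝ v z Complex.I))
    (hwy : fderiv ℝ w z Complex.I = A z * ‖f‖ ^ (p - 2) * fderiv ℝ v z 1) :
    let F : ℂ → ℂ := fun ζ => (v ζ : ℂ) + (w ζ : ℂ) * Complex.I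
    let Fz : ℂ := (1 / 2) * (fderiv ℝ F z 1 - Complex.I * fderiv ℝ F z Complex.I)
    let Fzbar : ℂ := (1 / 2) * (fderiv ℝ F z 1 + Complex.I * fderiv ℝ F z Complex.I)
    f * ((1 + A z * ‖f‖ ^ (p - 2) : ℝ) : ℂ) * Fzbar
      = ((1 - A z * ‖f‖ ^ (p - 2) : ℝ) : ℂ) * (starRingEnd ℂ) f * Fz := by
  intro F Fz Fzbar
  have hv' : HasFDerivAt (fun ζ => (v ζ : ℂ))
      (Complex.ofRealCLM.comp (fderiv ℝ v z)) z :=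
    Complex.ofRealCLM.hasFDerivAt.comp z hv.hasFDerivAt
  have hw' : HasFDerivAt (fun ζ => (w ζ : ℂ))
      (Complex.ofRealCLM.comp (fderiv ℝ w z)) z :=
    Complex.ofRealCLM.hasFDerivAt.comp z hw.hasFDerivAt
  have hF : HasFDerivAt F
      (Complex.ofRealCLM.comp (fderiv ℝ v z)
        + (Complex.ofRealCLM.comp (fderiv ℝ w z)).smulRight Complex.I
            ∘L ContinuousLinearMap.id ℝ ℂ) z := by
    have := hv'.add (hw'.mul_const Complex.I)
    refine this.congr_fderiv ?_
    ext u
    simp [ContinuousLinearMap.smulRight_apply]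
    ring
  have hFd : fderiv ℝ F z = _ := hF.fderiv
  have h1 : (fderiv ℝ F z 1 : ℂ)
      = ((fderiv ℝ v z 1 : ℝ) : ℂ) + ((fderiv ℝ w z 1 : ℝ) : ℂ) * Complex.I := by
    rw [hFd]; simp [ContinuousLinearMap.smulRight_apply]
  have h2 : (fderiv ℝ F z Complex.I : ℂ)
      = ((fderiv ℝ v z Complex.I : ℝ) : ℂ)
        + ((fderiv ℝ w z Complex.I : ℝ) : ℂ) * Complex.I := by
    rw [hFd]; simp [ContinuousLinearMap.smulRight_apply]
  set a : ℝ := fderiv ℝ v z 1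
  set b : ℝ := fderiv ℝ v z Complex.I
  set k : ℝ := A z * ‖f‖ ^ (p - 2)
  have hconj : (starRingEnd ℂ) f = (a : ℂ) + (b : ℂ) * Complex.I := by
    simp [hf, map_sub, map_mul, Complex.conj_ofReal, Complex.conj_I]
  show f * _ * ((1 / 2) * (fderiv ℝ F z 1 + Complex.I * fderiv ℝ F z Complex.I))
      = _ * (starRingEnd ℂ) f * ((1 / 2) * (fderiv ℝ F z 1 - Complex.I * fderiv ℝ F z Complex.I))
  rw [h1, h2, hwx, hwy, hconj, hf]
  push_cast
  ring_nf
  rw [show (Complex.I)^3 = -Complex.I by simp [pow_succ, Complex.I_sq], Complex.I_sq]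
  ring
end
end
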